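/- Let (X,d) be a metric space, μ a Borel measure on X, x ∈ X, r > 0 and D ≥ 1. Assume 0 < μ(B_t(x)) < ∞ and μ(B_{4t}(x)) ≤ D · μ(B_t(x)) for all t ∈ [r/4, r]. Then for every measurable f : X → [0,∞], ⨍_{B_r(x)} f dμ ≤ (D / log 4) · ∫_{r/4}^r ( ⨍_{B_{4t}(x)} f dμ ) dt/t ≤ (D / log 4) · ∫_0^r ( ⨍_{B_{4t}(x)} f dμ ) dt/t. -/

import Mathlib

open MeasureTheory
open scoped ENNReal
open intervalIntegral in

/-- Let `(X,d)` be a metric space, `μ` a Borel measure on `X`, `x ∈ X`,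
`r > 0` and `D ≥ 1`. Assume `0 < μ(B_t(x)) < ∞` and `μ(B_{4t}(x)) ≤ D μ(B_t(x))` for all
`t ∈ [r/4, r]`. Then for every measurable `f : X → [0,∞]`,
`⨍_{B_r(x)} f dμ ≤ (D/log 4) ∫_{r/4}^r (⨍_{B_{4t}(x)} f dμ) dt/t
  ≤ (D/log 4) ∫_0^r (⨍_{B_{4t}(x)} f dμ) dt/t`. -/
theorem stmt12 {X : Type*} [MetricSpace X] [MeasurableSpace X] [BorelSpace X]
    (μ : Measure X) (x : X) (r : ℝ) (hr : 0 < r) (D : ℝ) (hD : 1 ≤ D)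
    (hμ : ∀ t ∈ Set.Icc (r / 4) r,
      0 < μ (Metric.ball x t) ∧ μ (Metric.ball x t) < ⊤ ∧
        μ (Metric.ball x (4 * t)) ≤ ENNReal.ofReal D * μ (Metric.ball x t))
    (f : X → ℝ≥0∞) (hf : Measurable f) :
    (⨍⁻ y in Metric.ball x r, f y ∂μ) ≤
      ENNReal.ofReal (D / Real.log 4) *
        ∫⁻ t in Set.Ioc (r / 4) r,
          (⨍⁻ y in Metric.ball x (4 * t), f y ∂μ) / ENNReal.ofReal t ∧
    ENNReal.ofReal (D / Real.log 4) *
        ∫⁻ t in Set.Ioc (r / 4) r,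
          (⨍⁻ y in Metric.ball x (4 * t), f y ∂μ) / ENNReal.ofReal t ≤
      ENNReal.ofReal (D / Real.log 4) *
        ∫⁻ t in Set.Ioc 0 r,
          (⨍⁻ y in Metric.ball x (4 * t), f y ∂μ) / ENNReal.ofReal t := by
  have hr4 : 0 < r / 4 := by linarith
  have h14 : r / 4 ≤ r := by linarith
  have hDpos : (0 : ℝ) < D := by linarith
  have hlog4 : 0 < Real.log 4 := Real.log_pos (by norm_num)
  have hD0 : ENNReal.ofReal D ≠ 0 := by
    simp [ENNReal.ofReal_eq_zero, not_le, hDpos]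
  have hDT : ENNReal.ofReal D ≠ ⊤ := ENNReal.ofReal_ne_top
  obtain ⟨hμr0, hμrT, _⟩ := hμ r ⟨h14, le_rfl⟩
  set I : ℝ≥0∞ := ∫⁻ y in Metric.ball x r, f y ∂μ with hI
  set c : ℝ≥0∞ := I / (ENNReal.ofReal D * μ (Metric.ball x r)) with hc
  -- pointwise lower bound on the averages
  have key : ∀ t ∈ Set.Ioc (r / 4) r,
      c ≤ ⨍⁻ y in Metric.ball x (4 * t), f y ∂μ := by
    intro t ht
    obtain ⟨h1, h2, h3⟩ := hμ t ⟨le_of_lt ht.1, ht.2⟩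
    rw [setLAverage_eq]
    refine ENNReal.div_le_div ?_ ?_
    · exact lintegral_mono_set (Metric.ball_subset_ball (by linarith [ht.1]))
    · exact h3.trans (mul_le_mul_right (measure_mono (Metric.ball_subset_ball ht.2)) _)
  -- the logarithmic integral
  have hJ : ∫⁻ t in Set.Ioc (r / 4) r, (ENNReal.ofReal t)⁻¹
      = ENNReal.ofReal (Real.log 4) := by
    have hne : ∀ y ∈ Set.uIcc (r / 4) r, y ≠ (0 : ℝ) := by
      intro y hy
      rw [Set.uIcc_of_le h14] at hy
      exact ne_of_gt (lt_of_lt_of_le hr4 hy.1)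
    have hInt : IntegrableOn (fun t : ℝ => t⁻¹) (Set.Ioc (r / 4) r) :=
      (intervalIntegrable_iff_integrableOn_Ioc_of_le h14).mp
        (intervalIntegrable_inv hne continuousOn_id)
    have hval : ∫ t in Set.Ioc (r / 4) r, t⁻¹ = Real.log 4 := by
      rw [← intervalIntegral.integral_of_le h14,
        integral_inv (by rw [Set.uIcc_of_le h14]; exact fun h => absurd h.1 (not_le.mpr hr4))]
      congr 1
      field_simp
    have := (ofReal_integral_eq_lintegral_ofReal hInt ?_).symm
    · rw [← hval, ← this]
      refine setLIntegral_congr_fun measurableSet_Ioc ?_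
      intro t ht
      beta_reduce
      rw [ENNReal.ofReal_inv_of_pos (lt_of_lt_of_le hr4 ht.1.le)]
    · filter_upwards [ae_restrict_mem measurableSet_Ioc] with t ht
      exact inv_nonneg.mpr (le_of_lt (lt_of_lt_of_le hr4 ht.1.le))
  -- lower bound on the main integral
  have step : c * ENNReal.ofReal (Real.log 4) ≤
      ∫⁻ t in Set.Ioc (r / 4) r,
        (⨍⁻ y in Metric.ball x (4 * t), f y ∂μ) / ENNReal.ofReal t := by
    rw [← hJ, ← lintegral_const_mul c (f := fun t : ℝ => (ENNReal.ofReal t)⁻¹) ENNReal.measurable_ofReal.inv]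
    refine setLIntegral_mono' measurableSet_Ioc ?_
    intro t ht
    rw [ENNReal.div_eq_inv_mul, mul_comm (ENNReal.ofReal t)⁻¹]
    exact mul_le_mul_left (key t ht) _
  -- arithmetic identity
  have harith : ENNReal.ofReal (D / Real.log 4) * (c * ENNReal.ofReal (Real.log 4))
      = I / μ (Metric.ball x r) := by
    rw [hc, mul_comm (ENNReal.ofReal (D / Real.log 4)), mul_assoc,
      ← ENNReal.ofReal_mul (by positivity), mul_comm (Real.log 4) (D / Real.log 4), div_mul_cancel₀ _ (ne_of_gt hlog4),
      mul_comm, ← mul_div_assoc, ENNReal.mul_div_mul_left _ _ hD0 hDT]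
  constructor
  · rw [setLAverage_eq, ← hI, ← harith]
    exact mul_le_mul_right step _
  · exact mul_le_mul_right
      (lintegral_mono_set (Set.Ioc_subset_Ioc_left hr4.le)) _
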